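/- Let I ⊆ K[x₁,…,xₙ] be a zero-dimensional ideal with ≻ a monomial ordering such that LM(I) is stable, and fix ℓ ∈ {1,…,n}. The map sending a monomial m ∈ K[x₁,…,x_{ℓ−1}] ∖ LM(I) to m·x_ℓ^{α(m)}, where α(m) = min{k : m·x_ℓ^k ∈ LM(I)}, is a bijection from the set of monomials in K[x₁,…,x_{ℓ−1}] not in LM(I) onto the set of leading monomials of reduced Gröbner basis elements lying in K[x₁,…,x_ℓ] but not in K[x₁,…,x_{ℓ−1}]. -/

import Mathlib

open MvPolynomial

/-- A monomial `μ` is the leading monomial of `f` with respect to the strict order `lt`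
on exponent vectors. -/
def IsLM {K : Type*} [Field K] {n : ℕ}
    (lt : (Fin n →₀ ℕ) → (Fin n →₀ ℕ) → Prop)
    (f : MvPolynomial (Fin n) K) (μ : Fin n →₀ ℕ) : Prop :=
  μ ∈ f.support ∧ ∀ ν ∈ f.support, ν = μ ∨ lt ν μ

/-- The set of leading monomials of nonzero elements of an ideal. -/
def LMset {K : Type*} [Field K] {n : ℕ}
    (lt : (Fin n →₀ ℕ) → (Fin n →₀ ℕ) → Prop)
    (I : Ideal (MvPolynomial (Fin n) K)) : Set (Fin n →₀ ℕ) :=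
  {μ | ∃ f ∈ I, IsLM lt f μ}

/-- A set of monomials is stable: if `m ∈ S` and `xᵢ ∣ m` then `(xⱼ·m)/xᵢ ∈ S`
for all `j < i`. -/
def StableSet {n : ℕ} (S : Set (Fin n →₀ ℕ)) : Prop :=
  ∀ μ ∈ S, ∀ i : Fin n, μ i ≠ 0 → ∀ j : Fin n, j < i →
    μ - Finsupp.single i 1 + Finsupp.single j 1 ∈ S

/-- `G` is the reduced Gröbner basis of `I` with respect to the monomial order `lt`. -/
def IsReducedGB {K : Type*} [Field K] {n : ℕ}
    (lt : (Fin n →₀ ℕ) → (Fin n →₀ ℕ) → Prop)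
    (I : Ideal (MvPolynomial (Fin n) K)) (G : Set (MvPolynomial (Fin n) K)) : Prop :=
  G.Finite ∧
  (∀ g ∈ G, g ≠ 0 ∧ g ∈ I) ∧
  (∀ f ∈ I, f ≠ 0 → ∃ g ∈ G, ∃ μ ν, IsLM lt g μ ∧ IsLM lt f ν ∧ μ ≤ ν) ∧
  (∀ g ∈ G, ∀ μ, IsLM lt g μ → g.coeff μ = 1) ∧
  (∀ g ∈ G, ∀ g' ∈ G, g ≠ g' → ∀ μ ν, IsLM lt g' μ → ν ∈ g.support → ¬ μ ≤ ν)


section Aux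
variable {K : Type*} [Field K] {n : ℕ}
variable {lt : (Fin n →₀ ℕ) → (Fin n →₀ ℕ) → Prop}

lemma support_monomial_one_mul (δ : Fin n →₀ ℕ) (f : MvPolynomial (Fin n) K) :
    (monomial δ (1:K) * f).support = f.support.map (addLeftEmbedding δ) :=
  AddMonoidAlgebra.support_coeff_single_mul f 1 (by simp) δ

lemma isLM_unique (htrans : ∀ a b c, lt a b → lt b c → lt a c)
    (hirr : ∀ a, ¬ lt a a) {f : MvPolynomial (Fin n) K} {μ ν}
    (h1 : IsLM lt f μ) (h2 : IsLM lt f ν) : μ = ν := by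
  rcases h2.2 μ h1.1 with h | h
  · exact h
  · rcases h1.2 ν h2.1 with h' | h'
    · exact h'.symm
    · exact absurd (htrans _ _ _ h h') (hirr _)

lemma LMset_upper (hadd : ∀ a b c, lt a b → lt (a + c) (b + c))
    {I : Ideal (MvPolynomial (Fin n) K)} {μ ρ : Fin n →₀ ℕ}
    (h : μ ∈ LMset lt I) (hle : μ ≤ ρ) : ρ ∈ LMset lt I := by
  obtain ⟨f, hfI, hfs, hfmax⟩ := h
  obtain ⟨δ, rfl⟩ := exists_add_of_le hle
  refine ⟨monomial δ (1:K) * f, I.mul_mem_left _ hfI, ?_, ?_⟩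
  · rw [support_monomial_one_mul, Finset.mem_map]
    exact ⟨μ, hfs, by simp [addLeftEmbedding_apply, add_comm]⟩
  · intro ν hν
    rw [support_monomial_one_mul, Finset.mem_map] at hν
    obtain ⟨σ, hσ, rfl⟩ := hν
    rw [addLeftEmbedding_apply]
    rcases hfmax σ hσ with rfl | h'
    · exact Or.inl (add_comm _ _)
    · right
      rw [add_comm μ δ]
      rw [add_comm δ σ, add_comm δ μ]
      exact hadd _ _ _ h'

lemma finset_exists_max (hlin : ∀ a b, a = b ∨ lt a b ∨ lt b a)
    (htrans : ∀ a b c, lt a b → lt b c → lt a c)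
    (s : Finset (Fin n →₀ ℕ)) (hs : s.Nonempty) :
    ∃ μ ∈ s, ∀ ν ∈ s, ν = μ ∨ lt ν μ := by
  classical
  revert hs
  induction s using Finset.induction_on with
  | empty => intro hs; exact absurd hs (by simp)
  | insert a t ha ih =>
    intro _
    by_cases hts : t.Nonempty
    · obtain ⟨μ, hμt, hμ⟩ := ih hts
      rcases hlin a μ with h | h | h
      · refine ⟨μ, Finset.mem_insert_of_mem hμt, fun ν hν => ?_⟩
        rcases Finset.mem_insert.1 hν with rfl | hν
        · exact Or.inl h
        · exact hμ ν hν
      · refine ⟨μ, Finset.mem_insert_of_mem hμt, fun ν hν => ?_⟩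
        rcases Finset.mem_insert.1 hν with rfl | hν
        · exact Or.inr h
        · exact hμ ν hν
      · refine ⟨a, Finset.mem_insert_self a t, fun ν hν => ?_⟩
        rcases Finset.mem_insert.1 hν with rfl | hν
        · exact Or.inl rfl
        · rcases hμ ν hν with rfl | hν'
          · exact Or.inr h
          · exact Or.inr (htrans _ _ _ hν' h)
    · rw [Finset.not_nonempty_iff_eq_empty] at hts
      subst hts
      refine ⟨a, Finset.mem_insert_self a _, fun ν hν => ?_⟩
      rcases Finset.mem_insert.1 hν with rfl | hν
      · exact Or.inl rfl
      · simp at hν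

lemma exists_isLM (hlin : ∀ a b, a = b ∨ lt a b ∨ lt b a)
    (htrans : ∀ a b c, lt a b → lt b c → lt a c)
    {f : MvPolynomial (Fin n) K} (hf : f ≠ 0) : ∃ μ, IsLM lt f μ := by
  obtain ⟨μ, hμ, h⟩ := finset_exists_max hlin htrans f.support
    (MvPolynomial.support_nonempty.2 hf)
  exact ⟨μ, hμ, h⟩

lemma exists_single_mem_LMset (hlin : ∀ a b, a = b ∨ lt a b ∨ lt b a)
    (htrans : ∀ a b c, lt a b → lt b c → lt a c)
    {I : Ideal (MvPolynomial (Fin n) K)}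
    (hI : FiniteDimensional K (MvPolynomial (Fin n) K ⧸ I)) (i : Fin n) :
    ∃ N : ℕ, Finsupp.single i N ∈ LMset lt I := by
  classical
  have hdep : ¬ LinearIndependent K
      (fun k : ℕ => (Ideal.Quotient.mk I) (X i ^ k : MvPolynomial (Fin n) K)) :=
    Module.Finite.not_linearIndependent_of_infinite _
  rw [linearIndependent_iff'] at hdep
  push_neg at hdep
  obtain ⟨s, g, hsum, k0, hk0s, hk0⟩ := hdep
  set p : MvPolynomial (Fin n) K :=
    ∑ k ∈ s, monomial (Finsupp.single i k) (g k) with hp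
  have hterm : ∀ k, monomial (Finsupp.single i k) (g k) = g k • (X i ^ k : MvPolynomial (Fin n) K) := by
    intro k
    rw [X_pow_eq_monomial, smul_monomial, smul_eq_mul, mul_one]
  have hpI : p ∈ I := by
    rw [← Ideal.Quotient.eq_zero_iff_mem, hp, map_sum, ← hsum]
    refine Finset.sum_congr rfl fun k _ => ?_
    rw [hterm k, ← Ideal.Quotient.mkₐ_eq_mk K I, map_smul, Ideal.Quotient.mkₐ_eq_mk]
  have hcoeff : p.coeff (Finsupp.single i k0) = g k0 := by
    rw [hp]
    rw [MvPolynomial.coeff_sum]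
    rw [Finset.sum_eq_single k0]
    · simp [coeff_monomial]
    · intro k hk hne
      rw [coeff_monomial, if_neg]
      intro h
      exact hne (Finsupp.single_injective i h)
    · intro h; exact absurd hk0s h
  have hp0 : p ≠ 0 := fun h => hk0 (by rw [← hcoeff, h, coeff_zero])
  obtain ⟨μ, hμ⟩ := exists_isLM hlin htrans hp0
  have hμs := hμ.1
  have : μ ∈ s.biUnion fun k => (monomial (Finsupp.single i k) (g k)).support := by
    exact MvPolynomial.support_sum hμs
  rw [Finset.mem_biUnion] at this
  obtain ⟨k, hks, hμk⟩ := this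
  rw [support_monomial] at hμk
  by_cases hgk : g k = 0
  · rw [if_pos hgk] at hμk; simp at hμk
  · rw [if_neg hgk] at hμk
    rw [Finset.mem_singleton] at hμk
    subst hμk
    exact ⟨k, p, hpI, hμ⟩

lemma isLM_ne_zero {f : MvPolynomial (Fin n) K} {μ} (h : IsLM lt f μ) : f ≠ 0 := by
  intro h0
  have := h.1
  rw [h0] at this
  simp at this

lemma GB_min (htrans : ∀ a b c, lt a b → lt b c → lt a c)
    (hirr : ∀ a, ¬ lt a a)
    {I : Ideal (MvPolynomial (Fin n) K)} {G : Set (MvPolynomial (Fin n) K)}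
    (hG : IsReducedGB lt I G) {g μ} (hg : g ∈ G) (hgμ : IsLM lt g μ)
    {ν} (hν : ν ∈ LMset lt I) (hle : ν ≤ μ) : ν = μ := by
  obtain ⟨f, hfI, hf⟩ := hν
  obtain ⟨g', hg', μ', ν', hg'μ', hfν', hle'⟩ := hG.2.2.1 f hfI (isLM_ne_zero hf)
  have hν'ν : ν' = ν := isLM_unique htrans hirr hfν' hf
  subst hν'ν
  by_cases hgg : g' = g
  · subst hgg
    have : μ' = μ := isLM_unique htrans hirr hg'μ' hgμ
    subst this
    exact le_antisymm hle hle'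
  · exact absurd (le_trans hle' hle)
      (hG.2.2.2.2 g hg g' hg' (fun h => hgg h.symm) μ' μ hg'μ' hgμ.1)

lemma stable_min (hadd : ∀ a b c, lt a b → lt (a + c) (b + c))
    {I : Ideal (MvPolynomial (Fin n) K)} (hstable : StableSet (LMset lt I)) (ℓ : Fin n)
    {m : Fin n →₀ ℕ} (hm0 : ∀ k, ℓ ≤ k → m k = 0) (hm : m ∉ LMset lt I)
    (hne : {k : ℕ | m + Finsupp.single ℓ k ∈ LMset lt I}.Nonempty)
    {ν} (hν : ν ∈ LMset lt I)
    (hle : ν ≤ m + Finsupp.single ℓ (sInf {k : ℕ | m + Finsupp.single ℓ k ∈ LMset lt I})) :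
    ν = m + Finsupp.single ℓ (sInf {k : ℕ | m + Finsupp.single ℓ k ∈ LMset lt I}) := by
  set S := {k : ℕ | m + Finsupp.single ℓ k ∈ LMset lt I} with hS
  set α := sInf S with hα
  have hαS : α ∈ S := Nat.sInf_mem hne
  have hαS' : (m + Finsupp.single ℓ α) ∈ LMset lt I := hαS
  have hα0 : α ≠ 0 := by
    intro h
    apply hm
    rw [h] at hαS'
    simpa using hαS'
  have hmℓ : m ℓ = 0 := hm0 ℓ le_rfl
  -- Step 1: ν ℓ = α
  have hle' : ∀ j, ν j ≤ m j + (if ℓ = j then α else 0) := by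
    intro j
    have := Finsupp.le_def.1 hle j
    rwa [Finsupp.add_apply, Finsupp.single_apply] at this
  have hle1 : ν ≤ m + Finsupp.single ℓ (ν ℓ) := by
    rw [Finsupp.le_def]
    intro k
    rw [Finsupp.add_apply, Finsupp.single_apply]
    by_cases hk : ℓ = k
    · rw [if_pos hk, ← hk, hmℓ]
      omega
    · rw [if_neg hk]
      have := hle' k
      rwa [if_neg hk, add_zero] at this
  have hνℓS : ν ℓ ∈ S := LMset_upper hadd hν hle1
  have hανℓ : α ≤ ν ℓ := Nat.sInf_le hνℓS
  have hνℓα : ν ℓ = α := by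
    have := hle' ℓ
    rw [if_pos rfl, hmℓ] at this
    omega
  -- Step 2: ν k = m k for k ≠ ℓ
  have hstep2 : ∀ k, k ≠ ℓ → ν k = m k := by
    intro k hk
    have hνk : ν k ≤ m k := by
      have := hle' k
      rwa [if_neg (fun h => hk h.symm), add_zero] at this
    rcases eq_or_lt_of_le hνk with h | h
    · exact h
    · exfalso
      have hkℓ : k < ℓ := by
        rcases lt_or_ge k ℓ with h' | h'
        · exact h'
        · exact absurd (hm0 k h' ▸ h) (by simp)
      have hν' := hstable ν hν ℓ (by rw [hνℓα]; exact hα0) k hkℓ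
      have hle2 : ν - Finsupp.single ℓ 1 + Finsupp.single k 1 ≤
          m + Finsupp.single ℓ (α - 1) := by
        rw [Finsupp.le_def]
        intro j
        simp only [Finsupp.add_apply, Finsupp.tsub_apply, Finsupp.single_apply]
        have h1 := hle' j
        split_ifs with hj hjk hjk
        · exact absurd (hjk.trans hj.symm) hk
        · subst hj
          omega
        · subst hjk
          rw [if_neg hj, add_zero] at h1
          omega
        · rw [if_neg hj, add_zero] at h1
          omega
      have hα1S : α - 1 ∈ S := LMset_upper hadd hν' hle2
      have := Nat.sInf_le hα1S
      omega
  ext k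
  rw [Finsupp.add_apply, Finsupp.single_apply]
  by_cases hk : ℓ = k
  · rw [if_pos hk, ← hk, hmℓ, hνℓα, zero_add]
  · rw [if_neg hk, add_zero]
    exact hstep2 k (fun h => hk h.symm)

end Aux

/-- the map `m ↦ m·x_ℓ^{α(m)}`, with `α(m) = min{k : m·x_ℓ^k ∈ LM(I)}`, is a
bijection from the monomials of `K[x₁,…,x_{ℓ−1}]` outside `LM(I)` onto the leading monomials
of reduced Gröbner basis elements lying in `K[x₁,…,x_ℓ]` but not in `K[x₁,…,x_{ℓ−1}]`. -/
theorem stmt_4 {K : Type*} [Field K] {n : ℕ}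
    (lt : (Fin n →₀ ℕ) → (Fin n →₀ ℕ) → Prop)
    (hlin : ∀ a b, a = b ∨ lt a b ∨ lt b a)
    (htrans : ∀ a b c, lt a b → lt b c → lt a c)
    (hirr : ∀ a, ¬ lt a a)
    (hadd : ∀ a b c, lt a b → lt (a + c) (b + c))
    (hzero : ∀ a : Fin n →₀ ℕ, a ≠ 0 → lt 0 a)
    (I : Ideal (MvPolynomial (Fin n) K))
    (hI : FiniteDimensional K (MvPolynomial (Fin n) K ⧸ I))
    (hstable : StableSet (LMset lt I))
    (G : Set (MvPolynomial (Fin n) K)) (hG : IsReducedGB lt I G)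
    (ℓ : Fin n) :
    Set.BijOn
      (fun m : Fin n →₀ ℕ =>
        m + Finsupp.single ℓ (sInf {k : ℕ | m + Finsupp.single ℓ k ∈ LMset lt I}))
      {m : Fin n →₀ ℕ | (∀ k : Fin n, ℓ ≤ k → m k = 0) ∧ m ∉ LMset lt I}
      {μ : Fin n →₀ ℕ | (∃ g ∈ G, IsLM lt g μ) ∧
        (∀ k : Fin n, ℓ < k → μ k = 0) ∧ μ ℓ ≠ 0} := by
  classical
  have hGI := hG.2.1
  have hdiv := hG.2.2.1
  obtain ⟨N, hN⟩ := exists_single_mem_LMset hlin htrans hI ℓ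
  have hSne : ∀ m : Fin n →₀ ℕ,
      {k : ℕ | m + Finsupp.single ℓ k ∈ LMset lt I}.Nonempty := by
    intro m
    exact ⟨N, LMset_upper hadd hN le_add_self⟩
  have hmaps : ∀ m : Fin n →₀ ℕ, (∀ k : Fin n, ℓ ≤ k → m k = 0) → m ∉ LMset lt I →
      (∃ g ∈ G, IsLM lt g (m + Finsupp.single ℓ
          (sInf {k : ℕ | m + Finsupp.single ℓ k ∈ LMset lt I}))) ∧
      (∀ k : Fin n, ℓ < k → (m + Finsupp.single ℓ
          (sInf {k : ℕ | m + Finsupp.single ℓ k ∈ LMset lt I})) k = 0) ∧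
      (m + Finsupp.single ℓ
          (sInf {k : ℕ | m + Finsupp.single ℓ k ∈ LMset lt I})) ℓ ≠ 0 := by
    intro m hm0 hm
    set S := {k : ℕ | m + Finsupp.single ℓ k ∈ LMset lt I} with hS
    set α := sInf S with hα
    have hαS : α ∈ S := Nat.sInf_mem (hSne m)
    have hμLM : (m + Finsupp.single ℓ α) ∈ LMset lt I := hαS
    have hα0 : α ≠ 0 := by
      intro h
      apply hm
      rw [h] at hμLM
      simpa using hμLM
    obtain ⟨f, hfI, hf⟩ := hμLM
    obtain ⟨g, hg, μ', ν', hgμ', hfν', hle'⟩ := hdiv f hfI (isLM_ne_zero hf)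
    have hν'eq : ν' = m + Finsupp.single ℓ α := isLM_unique htrans hirr hfν' hf
    have hμ'LM : μ' ∈ LMset lt I := ⟨g, (hGI g hg).2, hgμ'⟩
    have hμ'eq : μ' = m + Finsupp.single ℓ α :=
      stable_min hadd hstable ℓ hm0 hm (hSne m) hμ'LM (hν'eq ▸ hle')
    refine ⟨⟨g, hg, hμ'eq ▸ hgμ'⟩, ?_, ?_⟩
    · intro k hk
      rw [Finsupp.add_apply, Finsupp.single_apply, hm0 k hk.le,
        if_neg (fun h => absurd (h ▸ hk) (lt_irrefl _))]
      omega
    · rw [Finsupp.add_apply, Finsupp.single_apply, hm0 ℓ le_rfl, if_pos rfl, zero_add]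
      exact hα0
  refine ⟨?_, ?_, ?_⟩
  · rintro m ⟨hm0, hm⟩
    exact hmaps m hm0 hm
  · rintro m ⟨hm0, _⟩ m' ⟨hm'0, _⟩ h
    ext k
    by_cases hk : k = ℓ
    · rw [hk, hm0 ℓ le_rfl, hm'0 ℓ le_rfl]
    · have h2 := DFunLike.congr_fun h k
      simp only [Finsupp.add_apply, Finsupp.single_apply,
        if_neg (fun h' : ℓ = k => hk h'.symm), add_zero] at h2
      exact h2
  · rintro μ ⟨⟨g, hg, hgμ⟩, hsupp, hμℓ⟩
    set m := μ - Finsupp.single ℓ (μ ℓ) with hmdef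
    have hmk : ∀ k, k ≠ ℓ → m k = μ k := by
      intro k hk
      rw [hmdef, Finsupp.tsub_apply, Finsupp.single_apply,
        if_neg (fun h' : ℓ = k => hk h'.symm)]
      omega
    have hmℓ : m ℓ = 0 := by
      rw [hmdef, Finsupp.tsub_apply, Finsupp.single_apply, if_pos rfl]
      omega
    have hm0 : ∀ k, ℓ ≤ k → m k = 0 := by
      intro k hk
      rcases eq_or_lt_of_le hk with h | h
      · rw [← h]; exact hmℓ
      · rw [hmk k (fun h' => absurd (h' ▸ h) (lt_irrefl _))]
        exact hsupp k h
    have hμLM : μ ∈ LMset lt I := ⟨g, (hGI g hg).2, hgμ⟩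
    have hle_mμ : m ≤ μ := by
      rw [Finsupp.le_def]
      intro k
      by_cases hk : k = ℓ
      · rw [hk, hmℓ]; exact Nat.zero_le _
      · rw [hmk k hk]
    have hmnot : m ∉ LMset lt I := by
      intro hmem
      have heq := GB_min htrans hirr hG hg hgμ hmem hle_mμ
      apply hμℓ
      rw [← heq]
      exact hmℓ
    have hμeq : m + Finsupp.single ℓ (μ ℓ) = μ := by
      ext k
      rw [Finsupp.add_apply, Finsupp.single_apply]
      by_cases hk : ℓ = k
      · rw [if_pos hk, ← hk, hmℓ, zero_add]
      · rw [if_neg hk, add_zero, hmk k (fun h' => hk h'.symm)]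
    set S := {k : ℕ | m + Finsupp.single ℓ k ∈ LMset lt I} with hS
    have hμℓS : μ ℓ ∈ S := by
      rw [hS, Set.mem_setOf_eq, hμeq]
      exact hμLM
    have hαle : sInf S ≤ μ ℓ := Nat.sInf_le hμℓS
    have hαS : (m + Finsupp.single ℓ (sInf S)) ∈ LMset lt I := Nat.sInf_mem (hSne m)
    have hle2 : m + Finsupp.single ℓ (sInf S) ≤ μ := by
      rw [← hμeq, Finsupp.le_def]
      intro k
      rw [Finsupp.add_apply, Finsupp.add_apply, Finsupp.single_apply,
        Finsupp.single_apply]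
      by_cases hk : ℓ = k
      · rw [if_pos hk, if_pos hk]
        omega
      · rw [if_neg hk, if_neg hk]
    have hfinal : m + Finsupp.single ℓ (sInf S) = μ :=
      GB_min htrans hirr hG hg hgμ hαS hle2
    exact ⟨m, ⟨hm0, hmnot⟩, hfinal⟩
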